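/- arXiv:2602.19173 — 3 statements merged into one kernel-verified Lean document; each statement's English description precedes it below -/
import Mathlib

section
/- Covariance intersection upper bound for two blocks: if P₁, P₂ are positive definite n×n matrices, P₁₂ is any n×n matrix such that the joint matrix [[P₁, P₁₂],[P₁₂ᵀ, P₂]] is positive semidefinite, and ω₁, ω₂ > 0 with ω₁ + ω₂ = 1, then diag(P₁/ω₁, P₂/ω₂) − [[P₁, P₁₂],[P₁₂ᵀ, P₂]] is positive semidefinite. -/
open Matrix

/-- Covariance-intersection upper bound for two blocks: if `P₁, P₂` are
symmetric positive definite, the joint matrix `[[P₁, P₁₂],[P₁₂ᵀ, P₂]]` is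
positive semidefinite, and `ω₁, ω₂ > 0` with `ω₁ + ω₂ = 1`, then
`diag(P₁/ω₁, P₂/ω₂) − [[P₁, P₁₂],[P₁₂ᵀ, P₂]]` is positive semidefinite. -/
theorem covariance_intersection_two_blocks {n : ℕ}
    (P₁ P₂ P₁₂ : Matrix (Fin n) (Fin n) ℝ)
    (hP₁ : P₁.PosDef) (hP₂ : P₂.PosDef)
    (hJoint : (Matrix.fromBlocks P₁ P₁₂ P₁₂ᵀ P₂).PosSemidef)
    (ω₁ ω₂ : ℝ) (hω₁ : 0 < ω₁) (hω₂ : 0 < ω₂) (hsum : ω₁ + ω₂ = 1) :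
    (Matrix.fromBlocks (ω₁⁻¹ • P₁) 0 0 (ω₂⁻¹ • P₂) -
      Matrix.fromBlocks P₁ P₁₂ P₁₂ᵀ P₂).PosSemidef := by
  set a : ℝ := Real.sqrt (ω₂ / ω₁) with ha
  set b : ℝ := Real.sqrt (ω₁ / ω₂) with hb
  have ha0 : 0 < a := Real.sqrt_pos.mpr (by positivity)
  have hb0 : 0 < b := Real.sqrt_pos.mpr (by positivity)
  have ha2 : a * a = ω₂ / ω₁ := Real.mul_self_sqrt (by positivity)
  have hb2 : b * b = ω₁ / ω₂ := Real.mul_self_sqrt (by positivity)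
  have hab : a * b = 1 := by
    have h : (a * b) * (a * b) = 1 := by
      have : (a * b) * (a * b) = (a * a) * (b * b) := by ring
      rw [this, ha2, hb2]; field_simp
    nlinarith [mul_pos ha0 hb0]
  set M : Matrix (Fin n ⊕ Fin n) (Fin n ⊕ Fin n) ℝ :=
    Matrix.fromBlocks (a • (1 : Matrix (Fin n) (Fin n) ℝ)) 0 0
      (-(b • (1 : Matrix (Fin n) (Fin n) ℝ))) with hM
  have key : Matrix.fromBlocks (ω₁⁻¹ • P₁) 0 0 (ω₂⁻¹ • P₂) -
      Matrix.fromBlocks P₁ P₁₂ P₁₂ᵀ P₂ =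
      M * (Matrix.fromBlocks P₁ P₁₂ P₁₂ᵀ P₂) * Mᴴ := by
    have hMH : Mᴴ = M := by
      simp [hM, Matrix.fromBlocks_conjTranspose, Matrix.fromBlocks_transpose]
    rw [hMH, hM, Matrix.fromBlocks_multiply, Matrix.fromBlocks_multiply, sub_eq_add_neg,
      Matrix.fromBlocks_neg, Matrix.fromBlocks_add]
    simp only [Matrix.mul_zero, Matrix.zero_mul, Matrix.mul_neg, Matrix.neg_mul, neg_neg,
      add_zero, zero_add, Matrix.smul_mul, Matrix.mul_smul, Matrix.one_mul, Matrix.mul_one,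
      smul_smul, ha2, hb2, hab, one_smul]
    have h1 : ω₁⁻¹ • P₁ + -P₁ = (ω₂ / ω₁) • P₁ := by
      rw [show ω₂ / ω₁ = ω₁⁻¹ - 1 by field_simp; linarith, sub_smul, one_smul, sub_eq_add_neg]
    have h2 : ω₂⁻¹ • P₂ + -P₂ = (ω₁ / ω₂) • P₂ := by
      rw [show ω₁ / ω₂ = ω₂⁻¹ - 1 by field_simp; linarith, sub_smul, one_smul, sub_eq_add_neg]
    rw [h1, h2]
    congr 1 <;> simp [smul_smul, hab, hb2, mul_comm b a]
  rw [key]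
  exact hJoint.mul_mul_conjTranspose_same M
end

section
/- The split covariance diag((1/ω₁)P₁, (1/ω₂)P₂) with ω₁+ω₂=1, ω₁,ω₂>0, never underestimates the true joint covariance: for any joint covariance C = [[P₁, P₁₂],[P₁₂ᵀ, P₂]] ⪰ 0 with these diagonal blocks, and any vector a, we have aᵀ diag(P₁/ω₁, P₂/ω₂) a ≥ aᵀ C a. -/
open Matrix

/-- The split covariance `diag(P₁/ω₁, P₂/ω₂)` never underestimates the true
joint covariance: for any joint PSD covariance `C = [[P₁, P₁₂],[P₁₂ᵀ, P₂]]`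
with these diagonal blocks and any vector `a`,
`aᵀ diag(P₁/ω₁, P₂/ω₂) a ≥ aᵀ C a`. -/
theorem split_covariance_upper_bound {n : ℕ}
    (P₁ P₂ P₁₂ : Matrix (Fin n) (Fin n) ℝ)
    (hP₁ : P₁.PosSemidef) (hP₂ : P₂.PosSemidef)
    (hC : (Matrix.fromBlocks P₁ P₁₂ P₁₂ᵀ P₂).PosSemidef)
    (ω₁ ω₂ : ℝ) (hω₁ : 0 < ω₁) (hω₂ : 0 < ω₂) (hsum : ω₁ + ω₂ = 1)
    (a : Fin n ⊕ Fin n → ℝ) :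
    a ⬝ᵥ (Matrix.fromBlocks (ω₁⁻¹ • P₁) 0 0 (ω₂⁻¹ • P₂) *ᵥ a) ≥
      a ⬝ᵥ (Matrix.fromBlocks P₁ P₁₂ P₁₂ᵀ P₂ *ᵥ a) := by
  set u : Fin n → ℝ := fun i => a (Sum.inl i) with hu
  set v : Fin n → ℝ := fun i => a (Sum.inr i) with hv
  have ha : a = Sum.elim u v := by funext x; cases x <;> rfl
  set c := Real.sqrt (ω₂ / ω₁) with hcdef
  set d := Real.sqrt (ω₁ / ω₂) with hddef
  have hc : c ^ 2 = ω₂ / ω₁ := Real.sq_sqrt (by positivity)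
  have hd : d ^ 2 = ω₁ / ω₂ := Real.sq_sqrt (by positivity)
  have hcd : c * d = 1 := by
    rw [hcdef, hddef, ← Real.sqrt_mul (by positivity)]
    rw [show ω₂ / ω₁ * (ω₁ / ω₂) = 1 by field_simp]
    exact Real.sqrt_one
  have hXY : v ⬝ᵥ (P₁₂ᵀ *ᵥ u) = u ⬝ᵥ (P₁₂ *ᵥ v) := by
    rw [Matrix.dotProduct_mulVec, Matrix.vecMul_transpose, dotProduct_comm]
  have key := hC.dotProduct_mulVec_nonneg (Sum.elim (c • u) (-(d • v)))
  rw [ha]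
  simp only [Matrix.fromBlocks_mulVec, sumElim_dotProduct_sumElim,
    dotProduct_add, Matrix.mulVec_smul, Matrix.mulVec_neg, Matrix.mulVec_add,
    smul_dotProduct, dotProduct_smul, dotProduct_neg,
    Matrix.smul_mulVec, neg_dotProduct, Matrix.zero_mulVec, dotProduct_zero,
    smul_eq_mul, add_zero, zero_add, smul_neg, neg_neg, Sum.elim_comp_inl, Sum.elim_comp_inr,
    star_trivial] at key ⊢
  rw [hXY] at key ⊢
  have h1 : ω₁⁻¹ = 1 + ω₂ / ω₁ := by field_simp; linarith
  have h2 : ω₂⁻¹ = 1 + ω₁ / ω₂ := by field_simp; linarith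
  set A := u ⬝ᵥ P₁ *ᵥ u
  set B := v ⬝ᵥ P₂ *ᵥ v
  set X := u ⬝ᵥ P₁₂ *ᵥ v
  have hk : c * (c * A) + -(d * (c * X)) + (c * -(d * X) + -(d * -(d * B)))
      = c ^ 2 * A - 2 * (c * d) * X + d ^ 2 * B := by ring
  rw [hk, hc, hd, hcd] at key
  rw [h1, h2]
  nlinarith [key]
end

section
/- The vector N₁ = (g, 0, 0, 0)ᵀ ∈ ℝ¹² lies in the kernel of the observability block H_u Φ, where H_u = H_pu [⌊(p_u − p_I)×⌋, 0₃, I₃, −I₃] is the right-invariant range-measurement Jacobian (with tag offset p_T = 0) and Φ = exp(F_A t) for the nilpotent F_A with blocks (2,1) = ⌊g×⌋, (3,2) = I₃; more precisely H_u N₁ = 0 and F_A N₁ has second component ⌊g×⌋g = 0, third and fourth components 0, so H_u Φ N₁ = 0 for all t ≥ 0. -/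
open Matrix

attribute [local instance] Matrix.linftyOpNormedRing Matrix.linftyOpNormedAlgebra

def skew (g : Fin 3 → ℝ) : Matrix (Fin 3) (Fin 3) ℝ :=
  !![0, -g 2, g 1; g 2, 0, -g 0; -g 1, g 0, 0]

/-- The 12×12 nilpotent propagation Jacobian `F_A` (blocks indexed by
`Fin 4 × Fin 3`): block (2,1) is `⌊g×⌋`, block (3,2) is `I₃`, others zero. -/
def FA (g : Fin 3 → ℝ) : Matrix (Fin 4 × Fin 3) (Fin 4 × Fin 3) ℝ :=
  Matrix.of fun p q =>
    if p.1 = 1 ∧ q.1 = 0 then skew g p.2 q.2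
    else if p.1 = 2 ∧ q.1 = 1 then (if p.2 = q.2 then 1 else 0)
    else 0

/-- The right-invariant range-measurement Jacobian (tag offset `p_T = 0`)
applied to the error vector `ξ = (ξ_θ, ξ_v, ξ_p, ξ_u)`:
`H_u ξ = H_pu (⌊(p_u − p_I)×⌋ ξ_θ + ξ_p − ξ_u)`, where the row vector
`H_pu = (p_I − p_u)ᵀ/‖p_I − p_u‖`. -/
noncomputable def Hu (pI pu : Fin 3 → ℝ) (ξ : Fin 4 × Fin 3 → ℝ) : ℝ :=
  ((Real.sqrt ((pI - pu) ⬝ᵥ (pI - pu)))⁻¹ • (pI - pu)) ⬝ᵥ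
    (skew (pu - pI) *ᵥ (fun i => ξ (0, i)) + (fun i => ξ (2, i)) - fun i => ξ (3, i))

/-- If `M *ᵥ v = 0` then `exp ℝ M *ᵥ v = v`. -/
lemma exp_mulVec_of_mulVec_eq_zero {n : Type*} [Fintype n] [DecidableEq n]
    (M : Matrix n n ℝ) (v : n → ℝ) (h : M *ᵥ v = 0) :
    NormedSpace.exp M *ᵥ v = v := by
  have hpow : ∀ k : ℕ, 1 ≤ k → M ^ k *ᵥ v = 0 := by
    intro k hk
    obtain ⟨m, rfl⟩ := Nat.exists_eq_add_of_le hk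
    rw [add_comm, pow_succ, ← mulVec_mulVec, h, mulVec_zero]
  let L : Matrix n n ℝ →ₗ[ℝ] (n → ℝ) :=
    { toFun := fun A => A *ᵥ v
      map_add' := fun A B => add_mulVec A B v
      map_smul' := fun c A => smul_mulVec c A v }
  have hL : Continuous L := LinearMap.continuous_of_finiteDimensional L
  have hs : Summable (fun k : ℕ => ((k.factorial : ℝ))⁻¹ • M ^ k) :=
    NormedSpace.expSeries_summable' (𝕂 := ℝ) M
  have hmap : NormedSpace.exp M *ᵥ v = ∑' k : ℕ, L (((k.factorial : ℝ))⁻¹ • M ^ k) := by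
    rw [NormedSpace.exp_eq_tsum ℝ]
    exact ((hs.hasSum.mapL (L.toContinuousLinearMap)).tsum_eq).symm
  rw [hmap]
  have hzero : ∀ k : ℕ, k ≠ 0 → L (((k.factorial : ℝ))⁻¹ • M ^ k) = 0 := by
    intro k hk
    have : M ^ k *ᵥ v = 0 := hpow k (Nat.one_le_iff_ne_zero.mpr hk)
    simp [L, smul_mulVec, this]
  rw [tsum_eq_single 0 hzero]
  simp [L]

lemma FA_mulVec_N₁ (g : Fin 3 → ℝ) :
    FA g *ᵥ (fun q : Fin 4 × Fin 3 => if q.1 = 0 then g q.2 else 0) = 0 := by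
  ext ⟨i, j⟩
  fin_cases i <;> fin_cases j <;>
    simp [FA, skew, mulVec, dotProduct, Fintype.sum_prod_type, Fin.sum_univ_three,
      Matrix.vecHead, Matrix.vecTail, Function.comp_def] <;> ring

/-- The direction `N₁ = (g, 0, 0, 0)ᵀ ∈ ℝ¹²` lies in the kernel of the
observability block `H_u Φ` with `Φ = exp(F_A t)`:
`H_u exp(F_A t) N₁ = 0` for all `t ≥ 0`. -/
theorem gravity_direction_unobservable (g pI pu : Fin 3 → ℝ) (hne : pI ≠ pu)
    (N₁ : Fin 4 × Fin 3 → ℝ) (hN₁ : N₁ = fun q => if q.1 = 0 then g q.2 else 0) :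
    ∀ t : ℝ, 0 ≤ t → Hu pI pu (NormedSpace.exp (t • FA g) *ᵥ N₁) = 0 := by
  intro t _
  have h0 : (t • FA g) *ᵥ N₁ = 0 := by
    rw [hN₁, smul_mulVec, FA_mulVec_N₁, smul_zero]
  rw [exp_mulVec_of_mulVec_eq_zero _ _ h0, hN₁]
  unfold Hu
  rw [smul_dotProduct, smul_eq_mul, mul_eq_zero]
  right
  simp [skew, mulVec, dotProduct, Fin.sum_univ_three, Pi.sub_apply,
    Matrix.vecHead, Matrix.vecTail, Function.comp_def]
  ring
end
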